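/- Let P ⊂ ℝ^d be a rational d-polytope with irredundant presentation P = ⋂_{i=1}^m {x : ⟨a_i, x⟩ ≥ b_i}, each (a_i, b_i) ∈ ℤ^{d+1} primitive, and let F_i = P ∩ {x : ⟨a_i, x⟩ = b_i} be the facet of P lying in the ith bounding hyperplane. Then for v ∈ ℝ^d, the translated cone 𝒞_{F_i} + (v, 0) contains a lattice point of ℤ^{d+1} if and only if ⟨a_i, v⟩ ∈ ℤ. -/

import Mathlib

open Set Pointwise

noncomputable section

/-- The lattice `ℤ^d` inside `ℝ^d`. -/
def latticePts (d : ℕ) : Set (Fin d → ℝ) := {x | ∀ i, ∃ n : ℤ, x i = (n : ℝ)}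

/-- A point of `ℝ^d` with all coordinates rational. -/
def IsRationalPoint {d : ℕ} (x : Fin d → ℝ) : Prop := ∀ i, ∃ q : ℚ, x i = (q : ℝ)

/-- A rational `d`-polytope in `ℝ^d`: the convex hull of finitely many rational points
whose affine span is all of `ℝ^d`. -/
def IsRationalDPolytope {d : ℕ} (P : Set (Fin d → ℝ)) : Prop :=
  ∃ V : Finset (Fin d → ℝ), (∀ x ∈ V, IsRationalPoint x) ∧
    P = convexHull ℝ (V : Set (Fin d → ℝ)) ∧ affineSpan ℝ P = ⊤

/-- The cone over a polytope `R ⊂ ℝ^d`: `𝒞_R = {s(x, 1) : s ≥ 0, x ∈ R} ⊂ ℝ^{d+1}`. -/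
def coneOver {d : ℕ} (R : Set (Fin d → ℝ)) : Set (Fin (d + 1) → ℝ) :=
  {y | ∃ s : ℝ, 0 ≤ s ∧ ∃ x ∈ R, y = s • (Fin.snoc x 1 : Fin (d + 1) → ℝ)}

/-- Bezout over a finite family of integers. -/
lemma finset_bezout {ι : Type*} [DecidableEq ι] (s : Finset ι) (f : ι → ℤ) :
    ∃ u : ι → ℤ, ∑ x ∈ s, f x * u x = s.gcd f := by
  induction s using Finset.induction with
  | empty => exact ⟨0, by simp⟩
  | @insert c s' ha ih =>
    obtain ⟨u, hu⟩ := ih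
    refine ⟨fun x => if x = c then Int.gcdA (f c) (s'.gcd f)
      else u x * Int.gcdB (f c) (s'.gcd f), ?_⟩
    rw [Finset.sum_insert ha, Finset.gcd_insert]
    beta_reduce
    have h1 : ∑ x ∈ s', f x * (if x = c then Int.gcdA (f c) (s'.gcd f)
        else u x * Int.gcdB (f c) (s'.gcd f)) =
        (∑ x ∈ s', f x * u x) * Int.gcdB (f c) (s'.gcd f) := by
      rw [Finset.sum_mul]
      refine Finset.sum_congr rfl fun x hx => ?_
      rw [if_neg (by rintro rfl; exact ha hx)]; ring
    rw [if_pos rfl, h1, hu]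
    have h3 := Int.gcd_eq_gcd_ab (f c) (s'.gcd f)
    have h2 : (gcd (f c) (s'.gcd f) : ℤ) = ((f c).gcd (s'.gcd f) : ℤ) := rfl
    rw [h2, h3]

/-- An affine-linear functional constant on a set spanning everything is constant. -/
lemma affine_const {d : ℕ} (P : Set (Fin d → ℝ)) (htop : affineSpan ℝ P = ⊤)
    (A : Fin d → ℝ) (c : ℝ) (h : ∀ x ∈ P, ∑ l, A l * x l = c) (y : Fin d → ℝ) :
    ∑ l, A l * y l = c := by
  let Q : AffineSubspace ℝ (Fin d → ℝ) :=
    { carrier := {x | ∑ l, A l * x l = c}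
      smul_vsub_vadd_mem' := by
        intro t p₁ p₂ p₃ h1 h2 h3
        simp only [Set.mem_setOf_eq] at h1 h2 h3 ⊢
        have key : ∀ l, A l * (t • (p₁ -ᵥ p₂) +ᵥ p₃) l =
            t * (A l * p₁ l) - t * (A l * p₂ l) + A l * p₃ l := by
          intro l
          simp only [Pi.vadd_apply, Pi.smul_apply, vsub_eq_sub, Pi.sub_apply,
            vadd_eq_add, Pi.add_apply, smul_eq_mul]
          ring
        rw [Finset.sum_congr rfl fun l _ => key l, Finset.sum_add_distrib,
          Finset.sum_sub_distrib, ← Finset.mul_sum, ← Finset.mul_sum, h1, h2, h3]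
        ring }
  have hsub : P ⊆ (Q : Set (Fin d → ℝ)) := fun x hx => h x hx
  have h2 : affineSpan ℝ P ≤ Q := affineSpan_le.mpr hsub
  rw [htop] at h2
  exact h2 (AffineSubspace.mem_top ℝ _ y)

theorem stmt14 {d m : ℕ} (P : Set (Fin d → ℝ)) (hP : IsRationalDPolytope P)
    (a : Fin m → Fin d → ℤ) (b : Fin m → ℤ)
    -- the irredundant presentation `P = ⋂ᵢ {x : ⟨aᵢ, x⟩ ≥ bᵢ}` by primitive `(aᵢ, bᵢ)`
    (hpres : P = ⋂ i, {x : Fin d → ℝ | (b i : ℝ) ≤ ∑ j, (a i j : ℝ) * x j})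
    (hprim : ∀ i, Finset.univ.gcd (Fin.cons (b i) (a i)) = 1)
    (hirr : ∀ i : Fin m,
      (⋂ j ∈ Finset.univ.erase i, {x : Fin d → ℝ | (b j : ℝ) ≤ ∑ l, (a j l : ℝ) * x l}) ≠ P)
    (i : Fin m) (v : Fin d → ℝ) :
    (∃ y ∈ (fun z => z + (Fin.snoc v 0 : Fin (d + 1) → ℝ)) ''
        coneOver (P ∩ {x : Fin d → ℝ | ∑ j, (a i j : ℝ) * x j = (b i : ℝ)}),
      y ∈ latticePts (d + 1)) ↔
    ∃ n : ℤ, ∑ j, (a i j : ℝ) * v j = (n : ℝ) := by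
  constructor
  · -- forward direction
    rintro ⟨y, ⟨w, ⟨s, hs, x, ⟨hxP, hxeq⟩, rfl⟩, rfl⟩, hlat⟩
    simp only [latticePts, Set.mem_setOf_eq] at hlat
    obtain ⟨k, hk0⟩ := hlat (Fin.last d)
    have hk : s = (k : ℝ) := by simpa [Fin.snoc_last] using hk0
    choose z hz using fun l : Fin d => hlat (Fin.castSucc l)
    have hz' : ∀ l : Fin d, s * x l + v l = (z l : ℝ) := by
      intro l
      have h := hz l
      simpa [Fin.snoc_castSucc] using h
    refine ⟨(∑ l, a i l * z l) - k * b i, ?_⟩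
    have hsum : ∑ l, (a i l : ℝ) * v l =
        ∑ l, ((a i l : ℝ) * (z l : ℝ) - s * ((a i l : ℝ) * x l)) := by
      refine Finset.sum_congr rfl fun l _ => ?_
      rw [← hz' l]; ring
    rw [hsum, Finset.sum_sub_distrib]
    have : ∑ l, s * ((a i l : ℝ) * x l) = s * ∑ l, (a i l : ℝ) * x l := by
      rw [Finset.mul_sum]
    rw [this, hxeq, hk]
    push_cast
    ring
  · -- backward direction
    rintro ⟨n, hn⟩
    obtain ⟨V, -, -, hPtop⟩ := hP
    have hPne : P.Nonempty := by
      rw [← affineSpan_nonempty (k := ℝ)]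
      rw [hPtop]
      exact ⟨0, AffineSubspace.mem_top ℝ _ 0⟩
    obtain ⟨p0, hp0⟩ := hPne
    have hmem : ∀ x ∈ P, ∀ j, (b j : ℝ) ≤ ∑ l, (a j l : ℝ) * x l := by
      intro x hx j
      rw [hpres] at hx
      exact Set.mem_iInter.mp hx j
    have hmemP : ∀ x : Fin d → ℝ, (∀ j, (b j : ℝ) ≤ ∑ l, (a j l : ℝ) * x l) → x ∈ P := by
      intro x hx
      rw [hpres]
      exact Set.mem_iInter.mpr hx
    -- Bezout witnesses for each primitive row
    have hbez : ∀ j : Fin m, ∃ U : Fin (d + 1) → ℤ,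
        b j * U 0 + ∑ l, a j l * U l.succ = 1 := by
      intro j
      obtain ⟨U, hU⟩ := finset_bezout Finset.univ (Fin.cons (b j) (a j))
      refine ⟨U, ?_⟩
      rw [Fin.sum_univ_succ] at hU
      simp only [Fin.cons_zero, Fin.cons_succ] at hU
      rw [hU, hprim j]
    -- every constraint admits a point of P satisfying it strictly
    have hstrict : ∀ j : Fin m, ∃ qq ∈ P, (b j : ℝ) < ∑ l, (a j l : ℝ) * qq l := by
      intro j
      by_cases haj : a j = 0
      · obtain ⟨U, hU⟩ := hbez j
        rw [haj] at hU
        simp only [Pi.zero_apply, zero_mul, Finset.sum_const_zero, add_zero] at hU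
        have hble : (b j : ℝ) ≤ 0 := by
          have h := hmem p0 hp0 j
          simpa [haj] using h
        have hbneg : b j = -1 := by
          have hdvd : b j ∣ 1 := ⟨U 0, hU.symm⟩
          rcases Int.isUnit_iff.mp (isUnit_of_dvd_one hdvd) with h1 | h1
          · rw [h1] at hble; norm_num at hble
          · exact h1
        refine ⟨p0, hp0, ?_⟩
        rw [haj, hbneg]
        simp
      · by_contra hcon
        push_neg at hcon
        have heq : ∀ x ∈ P, ∑ l, (a j l : ℝ) * x l = (b j : ℝ) := by
          intro x hx
          exact le_antisymm (hcon x hx) (hmem x hx j)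
        obtain ⟨l0, hl0⟩ := Function.ne_iff.mp haj
        have h1 := affine_const P hPtop (fun l => (a j l : ℝ)) (b j) heq
          (p0 + fun l => (a j l : ℝ))
        have h2 := heq p0 hp0
        have h3 : ∑ l, (a j l : ℝ) * (p0 l + (a j l : ℝ)) =
            ∑ l, (a j l : ℝ) * p0 l + ∑ l, ((a j l : ℝ))^2 := by
          rw [← Finset.sum_add_distrib]
          refine Finset.sum_congr rfl fun l _ => by ring
        have h4 : ∑ l, ((a j l : ℝ))^2 = 0 := by
          simp only [Pi.add_apply] at h1
          rw [h3, h2] at h1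
          linarith
        have h5 : ((a j l0 : ℝ))^2 = 0 := by
          have hnn : ∀ l ∈ Finset.univ, (0:ℝ) ≤ ((a j l : ℝ))^2 := fun l _ => sq_nonneg _
          exact (Finset.sum_eq_zero_iff_of_nonneg hnn).mp h4 l0 (Finset.mem_univ l0)
        have h6 : (a j l0 : ℝ) = 0 := pow_eq_zero_iff (two_ne_zero) |>.mp h5
        exact hl0 (by exact_mod_cast h6)
    choose q hqP hq using hstrict
    have hm : 0 < m := i.pos
    -- a point Qpt satisfying all constraints strictly
    set Qpt : Fin d → ℝ := fun l => (m : ℝ)⁻¹ * ∑ j, q j l with hQdef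
    clear_value Qpt
    have hQstrict : ∀ k : Fin m, (b k : ℝ) < ∑ l, (a k l : ℝ) * Qpt l := by
      intro k
      have hswap : ∑ l, (a k l : ℝ) * Qpt l =
          (m : ℝ)⁻¹ * ∑ j, ∑ l, (a k l : ℝ) * q j l := by
        have h1 : ∀ l, (a k l : ℝ) * Qpt l = (m : ℝ)⁻¹ * ∑ j, (a k l : ℝ) * q j l := by
          intro l
          simp only [hQdef]
          rw [Finset.mul_sum, Finset.mul_sum, Finset.mul_sum]
          exact Finset.sum_congr rfl fun j _ => by ring
        rw [Finset.sum_congr rfl fun l _ => h1 l, ← Finset.mul_sum, Finset.sum_comm]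
      have hlt : (m : ℝ) * (b k : ℝ) < ∑ j, ∑ l, (a k l : ℝ) * q j l := by
        have h := Finset.sum_lt_sum (f := fun _ : Fin m => (b k : ℝ))
          (g := fun j => ∑ l, (a k l : ℝ) * q j l)
          (fun j _ => hmem (q j) (hqP j) k) ⟨k, Finset.mem_univ k, hq k⟩
        simpa [Finset.sum_const, nsmul_eq_mul] using h
      rw [hswap]
      have hmpos : (0:ℝ) < (m : ℝ) := by exact_mod_cast hm
      calc (b k : ℝ) = (m:ℝ)⁻¹ * ((m:ℝ) * (b k : ℝ)) := by field_simp
        _ < (m : ℝ)⁻¹ * ∑ j, ∑ l, (a k l : ℝ) * q j l :=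
            (mul_lt_mul_iff_right₀ (by positivity)).mpr hlt
    have hQP : Qpt ∈ P := hmemP Qpt fun j => le_of_lt (hQstrict j)
    -- a i ≠ 0
    have hai : a i ≠ 0 := by
      intro h0
      apply hirr i
      rw [hpres]
      ext x
      simp only [Set.mem_iInter, Finset.mem_erase, Set.mem_setOf_eq]
      constructor
      · intro hx j
        by_cases hji : j = i
        · subst hji
          have hb0 : (b j : ℝ) ≤ 0 := by
            have h := hmem p0 hp0 j
            simpa [h0] using h
          simpa [h0] using hb0
        · exact hx j ⟨hji, Finset.mem_univ j⟩
      · intro hx j hj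
        exact hx j
    -- the gcd of row i
    set g : ℤ := Finset.univ.gcd (a i) with hgdef
    clear_value g
    have hgpos : 0 < g := by
      have hg0 : g ≠ 0 := by
        rw [hgdef]
        intro h0
        apply hai
        funext l
        exact (Finset.gcd_eq_zero_iff.mp h0) l (Finset.mem_univ l)
      have hgnn : 0 ≤ g := by
        have hnorm := Finset.normalize_gcd (s := (Finset.univ : Finset (Fin d))) (f := a i)
        rw [← hgdef] at hnorm
        exact Int.nonneg_of_normalize_eq_self hnorm
      omega
    have hgdvd : ∀ l, g ∣ a i l := fun l =>
      hgdef ▸ Finset.gcd_dvd (f := a i) (Finset.mem_univ l)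
    obtain ⟨U, hU⟩ := hbez i
    set α : ℤ := U 0 with hαdef
    clear_value α
    have hαg : g ∣ (1 - b i * α) := by
      rw [show (1 : ℤ) - b i * α = ∑ l, a i l * U l.succ by rw [← hU]; ring]
      exact Finset.dvd_sum fun l _ => Dvd.dvd.mul_right (hgdvd l) _
    -- the point p violating only constraint i
    obtain ⟨p, hpS, hpnotP⟩ :
        ∃ p, p ∈ (⋂ j ∈ Finset.univ.erase i,
          {x : Fin d → ℝ | (b j : ℝ) ≤ ∑ l, (a j l : ℝ) * x l}) ∧ p ∉ P := by
      by_contra hcon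
      push_neg at hcon
      apply hirr i
      apply Set.Subset.antisymm
      · intro x hx; exact hcon x hx
      · intro x hx
        simp only [Set.mem_iInter]
        intro j hj
        exact hmem x hx j
    have hpj : ∀ j : Fin m, j ≠ i → (b j : ℝ) ≤ ∑ l, (a j l : ℝ) * p l := by
      intro j hj
      have h := Set.mem_iInter.mp hpS j
      exact Set.mem_iInter.mp h (Finset.mem_erase.mpr ⟨hj, Finset.mem_univ j⟩)
    have hpi : ∑ l, (a i l : ℝ) * p l < (b i : ℝ) := by
      by_contra hcon
      push_neg at hcon
      exact hpnotP (hmemP p fun j => by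
        by_cases hji : j = i
        · subst hji; exact hcon
        · exact hpj j hji)
    -- the facet point xstar
    set Sp : ℝ := ∑ l, (a i l : ℝ) * p l with hSpdef
    clear_value Sp
    set Sq : ℝ := ∑ l, (a i l : ℝ) * Qpt l with hSqdef
    clear_value Sq
    have hden : 0 < Sq - Sp := by
      have h := hQstrict i
      rw [← hSqdef] at h
      linarith
    set t : ℝ := ((b i : ℝ) - Sp) / (Sq - Sp) with htdef
    clear_value t
    have ht0 : 0 < t := by
      rw [htdef]
      exact div_pos (by linarith) hden
    have ht1 : t ≤ 1 := by
      rw [htdef, div_le_one hden]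
      have h := hQstrict i
      rw [← hSqdef] at h
      linarith
    set xstar : Fin d → ℝ := fun l => p l + t * (Qpt l - p l) with hxsdef
    clear_value xstar
    have hlincomb : ∀ k : Fin m, ∑ l, (a k l : ℝ) * xstar l =
        (∑ l, (a k l : ℝ) * p l) +
          t * ((∑ l, (a k l : ℝ) * Qpt l) - ∑ l, (a k l : ℝ) * p l) := by
      intro k
      have e1 : ∀ l, (a k l : ℝ) * xstar l = (a k l : ℝ) * p l +
          (t * ((a k l : ℝ) * Qpt l) - t * ((a k l : ℝ) * p l)) := by
        intro l
        simp only [hxsdef]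
        ring
      rw [Finset.sum_congr rfl fun l _ => e1 l, Finset.sum_add_distrib,
        Finset.sum_sub_distrib, ← Finset.mul_sum, ← Finset.mul_sum]
      ring
    have hxsi : ∑ l, (a i l : ℝ) * xstar l = (b i : ℝ) := by
      rw [hlincomb i, ← hSpdef, ← hSqdef, htdef]
      field_simp
      ring
    have hxsj : ∀ j : Fin m, j ≠ i → (b j : ℝ) < ∑ l, (a j l : ℝ) * xstar l := by
      intro j hj
      rw [hlincomb j]
      have h1 := hpj j hj
      have h2 := hQstrict j
      nlinarith [ht0, ht1]
    -- constants
    set E : ℝ := ∑ l, |(a i l : ℝ)| with hEdef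
    clear_value E
    have hEnn : 0 ≤ E := hEdef ▸ Finset.sum_nonneg fun l _ => abs_nonneg ((a i l : ℝ))
    obtain ⟨u, hu⟩ := finset_bezout Finset.univ (a i)
    set C : ℝ := 1 + E * ∑ l, |(u l : ℝ)| with hCdef
    clear_value C
    have husum : (0:ℝ) ≤ ∑ l, |(u l : ℝ)| := Finset.sum_nonneg fun l _ => abs_nonneg _
    have hCpos : (0:ℝ) < C := by rw [hCdef]; nlinarith
    have hCbound : ∀ l : Fin d, 1/2 + E * |(u l : ℝ)| ≤ C := by
      intro l
      rw [hCdef]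
      have h1 : |(u l : ℝ)| ≤ ∑ l', |(u l' : ℝ)| :=
        Finset.single_le_sum (f := fun l' => |(u l' : ℝ)|)
          (fun l' _ => abs_nonneg _) (Finset.mem_univ l)
      nlinarith
    -- the threshold R
    set δ : Fin m → ℝ := fun j => ∑ l, (a j l : ℝ) * xstar l - (b j : ℝ) with hδdef
    clear_value δ
    have hδpos : ∀ j : Fin m, j ≠ i → 0 < δ j := by
      intro j hj
      simp only [hδdef]
      have h := hxsj j hj
      linarith
    set R : ℝ := ∑ j ∈ Finset.univ.erase i,
      max 0 ((∑ l, |(a j l : ℝ)|) * C / δ j) with hRdef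
    have hRnn : 0 ≤ R := Finset.sum_nonneg fun j _ => le_max_left _ _
    have hRbig : ∀ j ∈ Finset.univ.erase i, (∑ l, |(a j l : ℝ)|) * C / δ j ≤ R := by
      intro j hj
      calc (∑ l, |(a j l : ℝ)|) * C / δ j
          ≤ max 0 ((∑ l, |(a j l : ℝ)|) * C / δ j) := le_max_right _ _
        _ ≤ R := hRdef ▸ Finset.single_le_sum
            (f := fun j' => max 0 ((∑ l, |(a j' l : ℝ)|) * C / δ j'))
            (fun j' _ => le_max_left _ _) hj
    -- choose the height s
    set T : ℤ := ⌈R⌉ + 1 + max 0 (n * α) with hTdef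
    clear_value T
    set s : ℤ := g * T - n * α with hsdef
    clear_value s
    have hT1 : 1 ≤ T := by
      have h1 : (0:ℤ) ≤ ⌈R⌉ := Int.ceil_nonneg hRnn
      have h2 : (0:ℤ) ≤ max 0 (n * α) := le_max_left _ _
      omega
    have hsR : R < (s : ℝ) := by
      have h1 : T ≤ g * T := le_mul_of_one_le_left (by omega) hgpos
      have h2 : ⌈R⌉ + 1 ≤ s := by
        have h3 : n * α ≤ max 0 (n * α) := le_max_right _ _
        rw [hsdef, hTdef]
        rw [hTdef] at h1
        omega
      calc R ≤ (⌈R⌉ : ℝ) := Int.le_ceil R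
        _ < ((⌈R⌉ + 1 : ℤ) : ℝ) := by push_cast; linarith
        _ ≤ (s : ℝ) := by exact_mod_cast h2
    have hspos : (0:ℝ) < (s:ℝ) := lt_of_le_of_lt hRnn hsR
    have hsne : (s:ℝ) ≠ 0 := ne_of_gt hspos
    -- divisibility
    set kk : ℤ := s * b i + n with hkkdef
    clear_value kk
    have hgkk : g ∣ kk := by
      rw [hkkdef, hsdef]
      rw [show (g * T - n * α) * b i + n = g * (T * b i) + n * (1 - b i * α) by ring]
      exact dvd_add (Dvd.intro _ rfl) (Dvd.dvd.mul_left hαg n)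
    -- rounding construction
    set w : Fin d → ℝ := fun l => (s : ℝ) * xstar l + v l with hwdef
    clear_value w
    have hw : ∑ l, (a i l : ℝ) * w l = (kk : ℝ) := by
      have h1 : ∑ l, (a i l : ℝ) * w l =
          (s:ℝ) * (∑ l, (a i l : ℝ) * xstar l) + ∑ l, (a i l : ℝ) * v l := by
        rw [Finset.mul_sum, ← Finset.sum_add_distrib]
        refine Finset.sum_congr rfl fun l _ => ?_
        simp only [hwdef]
        ring
      rw [h1, hxsi, hn, hkkdef]
      push_cast
      ring
    set z0 : Fin d → ℤ := fun l => round (w l) with hz0def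
    clear_value z0
    have hz0 : ∀ l, |(z0 l : ℝ) - w l| ≤ 1/2 := by
      intro l
      simp only [hz0def]
      rw [abs_sub_comm]
      exact abs_sub_round (w l)
    set e : ℤ := (∑ l, a i l * z0 l) - kk with hedef
    clear_value e
    have hge : g ∣ e := by
      rw [hedef]
      exact dvd_sub (Finset.dvd_sum fun l _ => Dvd.dvd.mul_right (hgdvd l) _) hgkk
    set c : ℤ := e / g with hcdef
    clear_value c
    have hcg : c * g = e := by rw [hcdef]; exact Int.ediv_mul_cancel hge
    have hebound : |(e : ℝ)| ≤ E := by
      have h1 : (e : ℝ) = ∑ l, (a i l : ℝ) * ((z0 l : ℝ) - w l) := by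
        rw [hedef]
        push_cast
        rw [← hw, ← Finset.sum_sub_distrib]
        refine Finset.sum_congr rfl fun l _ => by ring
      rw [h1]
      calc |∑ l, (a i l : ℝ) * ((z0 l : ℝ) - w l)|
          ≤ ∑ l, |(a i l : ℝ) * ((z0 l : ℝ) - w l)| := Finset.abs_sum_le_sum_abs _ _
        _ ≤ ∑ l, |(a i l : ℝ)| * (1/2) := by
            refine Finset.sum_le_sum fun l _ => ?_
            rw [abs_mul]
            exact mul_le_mul_of_nonneg_left (hz0 l) (abs_nonneg _)
        _ ≤ E := by
            rw [hEdef]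
            have h2 : ∑ l, |(a i l : ℝ)| * (1/2) = (∑ l, |(a i l : ℝ)|) * (1/2) :=
              (Finset.sum_mul _ _ _).symm
            rw [h2]
            nlinarith [hEnn]
    have hcbound : |(c : ℝ)| ≤ E := by
      have h1 : |c| ≤ |e| := by
        calc |c| = |c| * 1 := (mul_one _).symm
          _ ≤ |c| * g := mul_le_mul_of_nonneg_left hgpos (abs_nonneg c)
          _ = |c| * |g| := by rw [abs_of_pos hgpos]
          _ = |c * g| := (abs_mul c g).symm
          _ = |e| := by rw [hcg]
      calc |(c:ℝ)| = ((|c| : ℤ) : ℝ) := by push_cast; rfl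
        _ ≤ ((|e| : ℤ) : ℝ) := by exact_mod_cast h1
        _ = |(e:ℝ)| := by push_cast; rfl
        _ ≤ E := hebound
    set z : Fin d → ℤ := fun l => z0 l - c * u l with hzdef
    clear_value z
    have hzsum : ∑ l, a i l * z l = kk := by
      have h1 : ∑ l, a i l * z l = (∑ l, a i l * z0 l) - c * ∑ l, a i l * u l := by
        rw [Finset.mul_sum, ← Finset.sum_sub_distrib]
        refine Finset.sum_congr rfl fun l _ => ?_
        simp only [hzdef]
        ring
      rw [h1, hu, ← hgdef, hcg]
      omega
    have hzbound : ∀ l, |(z l : ℝ) - w l| ≤ C := by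
      intro l
      simp only [hzdef]
      push_cast
      have h0 : (z0 l : ℝ) - (c:ℝ) * (u l : ℝ) - w l =
          ((z0 l : ℝ) - w l) + (-((c:ℝ) * (u l : ℝ))) := by ring
      rw [h0]
      calc |((z0 l : ℝ) - w l) + (-((c:ℝ) * (u l : ℝ)))|
          ≤ |(z0 l : ℝ) - w l| + |(-((c:ℝ) * (u l : ℝ)))| := abs_add_le _ _
        _ ≤ 1/2 + E * |(u l : ℝ)| := by
            rw [abs_neg, abs_mul]
            have h2 := mul_le_mul_of_nonneg_right hcbound (abs_nonneg ((u l : ℝ)))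
            have h3 := hz0 l
            linarith
        _ ≤ C := hCbound l
    -- the point x on the facet
    set x : Fin d → ℝ := fun l => ((z l : ℝ) - v l) / (s : ℝ) with hxdef
    clear_value x
    have hxdiff : ∀ l, |x l - xstar l| ≤ C / (s : ℝ) := by
      intro l
      have h1 : x l - xstar l = ((z l : ℝ) - w l) / (s : ℝ) := by
        simp only [hxdef, hwdef]
        field_simp
        ring
      rw [h1, abs_div, abs_of_pos hspos]
      exact div_le_div_of_nonneg_right (hzbound l) hspos.le
    have hzreal : ∑ l, (a i l : ℝ) * (z l : ℝ) = (kk : ℝ) := by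
      exact_mod_cast congrArg (Int.cast : ℤ → ℝ) hzsum
    have hxi : ∑ l, (a i l : ℝ) * x l = (b i : ℝ) := by
      have h1 : ∀ l, (a i l : ℝ) * x l =
          ((a i l : ℝ) * (z l : ℝ) - (a i l : ℝ) * v l) / (s : ℝ) := by
        intro l
        simp only [hxdef]
        ring
      rw [Finset.sum_congr rfl fun l _ => h1 l, ← Finset.sum_div,
        Finset.sum_sub_distrib, hzreal, hn, hkkdef]
      push_cast
      field_simp
      ring
    have hxj : ∀ j : Fin m, j ≠ i → (b j : ℝ) ≤ ∑ l, (a j l : ℝ) * x l := by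
      intro j hj
      have hsplit : ∑ l, (a j l : ℝ) * x l =
          (∑ l, (a j l : ℝ) * xstar l) + ∑ l, (a j l : ℝ) * (x l - xstar l) := by
        rw [← Finset.sum_add_distrib]
        exact Finset.sum_congr rfl fun l _ => by ring
      have habs : |∑ l, (a j l : ℝ) * (x l - xstar l)| ≤
          (∑ l, |(a j l : ℝ)|) * (C / (s : ℝ)) := by
        calc |∑ l, (a j l : ℝ) * (x l - xstar l)|
            ≤ ∑ l, |(a j l : ℝ) * (x l - xstar l)| := Finset.abs_sum_le_sum_abs _ _
          _ ≤ ∑ l, |(a j l : ℝ)| * (C / (s : ℝ)) := by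
              refine Finset.sum_le_sum fun l _ => ?_
              rw [abs_mul]
              exact mul_le_mul_of_nonneg_left (hxdiff l) (abs_nonneg _)
          _ = (∑ l, |(a j l : ℝ)|) * (C / (s : ℝ)) := (Finset.sum_mul _ _ _).symm
      have hsmall : (∑ l, |(a j l : ℝ)|) * (C / (s : ℝ)) < δ j := by
        have h1 : (∑ l, |(a j l : ℝ)|) * C / δ j < (s : ℝ) :=
          lt_of_le_of_lt (hRbig j (Finset.mem_erase.mpr ⟨hj, Finset.mem_univ j⟩)) hsR
        have h2 : 0 < δ j := hδpos j hj
        rw [div_lt_iff₀ h2] at h1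
        rw [← mul_div_assoc, div_lt_iff₀ hspos]
        linarith [mul_comm (δ j) ((s:ℝ)), h1]
      have hδj : δ j = ∑ l, (a j l : ℝ) * xstar l - (b j : ℝ) := by simp only [hδdef]
      rw [hsplit]
      linarith [neg_abs_le (∑ l, (a j l : ℝ) * (x l - xstar l))]
    have hxP : x ∈ P := hmemP x fun j => by
      by_cases hji : j = i
      · subst hji; exact le_of_eq hxi.symm
      · exact hxj j hji
    -- assemble the lattice point
    have hylat : ((s : ℝ) • (Fin.snoc x 1 : Fin (d+1) → ℝ) +
        (Fin.snoc v 0 : Fin (d+1) → ℝ)) ∈ latticePts (d+1) := by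
      simp only [latticePts, Set.mem_setOf_eq]
      intro jj
      induction jj using Fin.lastCases with
      | last =>
        refine ⟨s, ?_⟩
        simp [Fin.snoc_last]
      | cast l =>
        refine ⟨z l, ?_⟩
        have h1 : ((s : ℝ) • (Fin.snoc x 1 : Fin (d+1) → ℝ) +
            (Fin.snoc v 0 : Fin (d+1) → ℝ)) l.castSucc = (s : ℝ) * x l + v l := by
          simp [Fin.snoc_castSucc]
        rw [h1]
        simp only [hxdef]
        field_simp
        ring
    exact ⟨_, Set.mem_image_of_mem _ ⟨(s : ℝ), hspos.le, x, ⟨hxP, hxi⟩, rfl⟩, hylat⟩
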